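/- Let H be a weakly norming graph without isolated vertices and let F be a subgraph of H. Then e(F)/v(F) ≤ e(H)/v(H), i.e. the average degree of any subgraph of H is at most the average degree of H. -/

import Mathlib

open MeasureTheory

noncomputable def sym2Val {V Ω : Type*} (W : Ω → Ω → ℝ) (x : V → Ω) : Sym2 V → ℝ :=
  Sym2.lift ⟨fun i j => (W (x i) (x j) + W (x j) (x i)) / 2, fun i j => by simp [add_comm]⟩

/-- Homomorphism density `t(G, W)` of a graph `G` in a symmetric kernel `W`. -/
noncomputable def homDensity {V : Type} [Fintype V] {Ω : Type*} [MeasurableSpace Ω]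
    (G : SimpleGraph V) (μ : Measure Ω) (W : Ω → Ω → ℝ) : ℝ :=
  ∫ x : V → Ω, ∏ᶠ e ∈ G.edgeSet, sym2Val W x e ∂(Measure.pi fun _ => μ)

/-- Decorated homomorphism density `t(G, w)` for a decoration `w` of the edges. -/
noncomputable def decDensity {V : Type} [Fintype V] {Ω : Type*} [MeasurableSpace Ω]
    (G : SimpleGraph V) (μ : Measure Ω) (w : Sym2 V → Ω → Ω → ℝ) : ℝ :=
  ∫ x : V → Ω, ∏ᶠ e ∈ G.edgeSet, sym2Val (w e) x e ∂(Measure.pi fun _ => μ)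

/-- Bounded symmetric measurable kernel. -/
def GoodKernel {Ω : Type*} [MeasurableSpace Ω] (W : Ω → Ω → ℝ) : Prop :=
  Measurable (Function.uncurry W) ∧ (∀ x y, W x y = W y x) ∧ ∃ C, ∀ x y, |W x y| ≤ C

/-- Hatami's Hölder-type characterisation of weakly norming graphs. -/
def WeaklyNorming {V : Type} [Fintype V] (G : SimpleGraph V) : Prop :=
  ∀ (Ω : Type) (_ : MeasurableSpace Ω) (μ : Measure Ω), IsProbabilityMeasure μ →
    ∀ w : Sym2 V → Ω → Ω → ℝ, (∀ e, GoodKernel (w e)) → (∀ e x y, 0 ≤ w e x y) →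
      decDensity G μ w ^ G.edgeSet.ncard ≤ ∏ᶠ e ∈ G.edgeSet, homDensity G μ (w e)

/-- Hatami's Hölder-type characterisation of seminorming graphs. -/
def Seminorming {V : Type} [Fintype V] (G : SimpleGraph V) : Prop :=
  ∀ (Ω : Type) (_ : MeasurableSpace Ω) (μ : Measure Ω), IsProbabilityMeasure μ →
    ∀ w : Sym2 V → Ω → Ω → ℝ, (∀ e, GoodKernel (w e)) →
      decDensity G μ w ^ G.edgeSet.ncard ≤ ∏ᶠ e ∈ G.edgeSet, |homDensity G μ (w e)|

/-- Norming: seminorming and `‖·‖_H` vanishes only on a.e.-zero kernels. -/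
def Norming {V : Type} [Fintype V] (G : SimpleGraph V) : Prop :=
  Seminorming G ∧
    ∀ (Ω : Type) (_ : MeasurableSpace Ω) (μ : Measure Ω), IsProbabilityMeasure μ →
      ∀ W : Ω → Ω → ℝ, GoodKernel W → homDensity G μ W = 0 →
        ∀ᵐ p ∂(μ.prod μ), W p.1 p.2 = 0

namespace AvgDegAux

noncomputable def μB : Measure Bool := (PMF.uniformOfFintype Bool).toMeasure

instance : IsProbabilityMeasure μB := PMF.toMeasure.isProbabilityMeasure _

lemma μB_singleton (b : Bool) : (μB {b}).toReal = 1/2 := by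
  rw [μB, PMF.toMeasure_apply_singleton _ b (measurableSet_singleton b),
    PMF.uniformOfFintype_apply]
  simp

lemma integral_μB (g : Bool → ℝ) : ∫ b, g b ∂μB = (g true + g false) / 2 := by
  rw [integral_fintype (Integrable.of_finite)]
  simp [Measure.real, μB_singleton, Fintype.sum_bool]
  ring

lemma integral_pi_prod {V : Type} [Fintype V] (g : V → Bool → ℝ) :
    ∫ x : V → Bool, ∏ v, g v (x v) ∂(Measure.pi fun _ => μB) = ∏ v, ∫ b, g v b ∂μB := by
  letI : MeasureSpace Bool := ⟨μB⟩
  haveI : SigmaFinite (volume : Measure Bool) := by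
    show SigmaFinite μB; infer_instance
  exact MeasureTheory.integral_fintype_prod_eq_prod (fun v => g v)

lemma finprod_mem_fin {α : Type*} (s : Set α) (hs : s.Finite) (g : α → ℝ) :
    ∏ᶠ e ∈ s, g e = ∏ e ∈ hs.toFinset, g e := by
  rw [← finprod_mem_coe_finset, hs.coe_toFinset]

/-- the graphon 1_{X×X}, X = {true}. -/
noncomputable def Ub : Bool → Bool → ℝ := fun a b => (if a then 1 else 0) * (if b then 1 else 0)

lemma Ub_nonneg (a b : Bool) : 0 ≤ Ub a b := by
  unfold Ub; positivity

lemma Ub_le_one (a b : Bool) : Ub a b ≤ 1 := by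
  unfold Ub
  rcases a <;> rcases b <;> norm_num

lemma sym2Val_mk {V : Type*} (W : Bool → Bool → ℝ) (x : V → Bool) (i j : V) :
    sym2Val W x s(i, j) = (W (x i) (x j) + W (x j) (x i)) / 2 := rfl

lemma sym2Val_Ub {V : Type*} (x : V → Bool) (i j : V) :
    sym2Val Ub x s(i, j) = (if x i then (1:ℝ) else 0) * (if x j then 1 else 0) := by
  rw [sym2Val_mk]
  unfold Ub
  ring

lemma hom_Ub {V : Type} [Fintype V] (H : SimpleGraph V)
    (hnoiso : ∀ v : V, ∃ u, H.Adj v u) :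
    homDensity H μB Ub = (1/2 : ℝ) ^ Fintype.card V := by
  have key : ∀ x : V → Bool, (∏ᶠ e ∈ H.edgeSet, sym2Val Ub x e)
      = ∏ v, (if x v then (1:ℝ) else 0) := by
    intro x
    rw [finprod_mem_fin _ H.edgeSet.toFinite]
    by_cases hx : ∀ v, x v = true
    · rw [Finset.prod_eq_one, Finset.prod_eq_one]
      · intro v _; simp [hx v]
      · intro e he
        induction e using Sym2.ind with
        | _ i j => rw [sym2Val_Ub]; simp [hx i, hx j]
    · push_neg at hx
      obtain ⟨v, hv⟩ := hx
      have hv' : x v = false := by simpa using hv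
      obtain ⟨u, hu⟩ := hnoiso v
      rw [Finset.prod_eq_zero (i := s(v, u)), Finset.prod_eq_zero (Finset.mem_univ v)]
      · simp [hv']
      · simp [SimpleGraph.mem_edgeSet, hu]
      · rw [sym2Val_Ub]; simp [hv']
  unfold homDensity
  simp_rw [key]
  rw [integral_pi_prod (fun _ b => if b then (1:ℝ) else 0)]
  simp [integral_μB]

lemma hom_one {V : Type} [Fintype V] (H : SimpleGraph V) :
    homDensity H μB (fun _ _ => (1:ℝ)) = 1 := by
  unfold homDensity
  have key : ∀ x : V → Bool,
      (∏ᶠ e ∈ H.edgeSet, sym2Val (fun _ _ => (1:ℝ)) x e) = 1 := by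
    intro x
    rw [finprod_mem_fin _ H.edgeSet.toFinite]
    apply Finset.prod_eq_one
    intro e he
    induction e using Sym2.ind with
    | _ i j => rw [sym2Val_mk]; norm_num
  simp_rw [key]
  simp

end AvgDegAux

/-- A weakly norming graph `H` without isolated vertices has no subgraph of larger
average degree: if `F` (on vertex set `U`) embeds into `H`, then
`e(F)/v(F) ≤ e(H)/v(H)`. -/
theorem weaklyNorming_avg_degree_max {V U : Type} [Fintype V] [Fintype U]
    (H : SimpleGraph V) (hH : WeaklyNorming H)
    (hnoiso : ∀ v : V, ∃ u, H.Adj v u)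
    (F : SimpleGraph U) (f : U → V) (hf : Function.Injective f)
    (hhom : ∀ a b, F.Adj a b → H.Adj (f a) (f b)) :
    (F.edgeSet.ncard : ℝ) / (Fintype.card U : ℝ) ≤
      (H.edgeSet.ncard : ℝ) / (Fintype.card V : ℝ) := by
  classical
  rcases isEmpty_or_nonempty U with hU | hU
  · haveI : IsEmpty (Sym2 U) := ⟨fun e => Sym2.ind (fun a _ => isEmptyElim a) e⟩
    have hF0 : F.edgeSet = ∅ := Set.eq_empty_of_isEmpty _
    rw [hF0]
    simp
    positivity
  · haveI : Nonempty V := ⟨f (Classical.arbitrary U)⟩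
    set HE : Finset (Sym2 V) := H.edgeSet.toFinite.toFinset with hHE
    set SF : Finset (Sym2 V) := (F.edgeSet.toFinite.toFinset).image (Sym2.map f) with hSF
    have hSFsub : SF ⊆ HE := by
      intro e he
      rw [hSF, Finset.mem_image] at he
      obtain ⟨e', he', rfl⟩ := he
      rw [Set.Finite.mem_toFinset] at he'
      rw [hHE, Set.Finite.mem_toFinset]
      induction e' using Sym2.ind with
      | _ a b =>
        rw [Sym2.map_pair_eq, SimpleGraph.mem_edgeSet]
        exact hhom a b (by rwa [SimpleGraph.mem_edgeSet] at he')
    have hSFcard : SF.card = F.edgeSet.ncard := by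
      rw [hSF, Finset.card_image_of_injective _ (Sym2.map.injective hf),
        Set.ncard_eq_toFinset_card _ F.edgeSet.toFinite]
    set w : Sym2 V → Bool → Bool → ℝ :=
      fun e => if e ∈ SF then AvgDegAux.Ub else fun _ _ => 1 with hw
    have hgood : ∀ e, GoodKernel (w e) := by
      intro e
      refine ⟨measurable_of_countable _, ?_, ⟨1, ?_⟩⟩
      · intro x y
        simp only [hw]
        split
        · unfold AvgDegAux.Ub; ring
        · rfl
      · intro x y
        simp only [hw]
        split
        · rw [abs_of_nonneg (AvgDegAux.Ub_nonneg _ _)]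
          exact AvgDegAux.Ub_le_one _ _
        · norm_num
    have hnn : ∀ e x y, 0 ≤ w e x y := by
      intro e x y
      simp only [hw]
      split
      · exact AvgDegAux.Ub_nonneg _ _
      · norm_num
    have hmain := hH Bool _ AvgDegAux.μB inferInstance w hgood hnn
    have hRHS : (∏ᶠ e ∈ H.edgeSet, homDensity H AvgDegAux.μB (w e))
        = ((1/2 : ℝ) ^ Fintype.card V) ^ F.edgeSet.ncard := by
      rw [AvgDegAux.finprod_mem_fin _ H.edgeSet.toFinite]
      have hcong : ∀ e ∈ HE, homDensity H AvgDegAux.μB (w e)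
          = if e ∈ SF then (1/2 : ℝ) ^ Fintype.card V else 1 := by
        intro e _
        simp only [hw]
        split
        · exact AvgDegAux.hom_Ub H hnoiso
        · exact AvgDegAux.hom_one H
      rw [show H.edgeSet.toFinite.toFinset = HE from rfl]
      rw [Finset.prod_congr rfl hcong,
        ← Finset.prod_filter (· ∈ SF) (fun _ => (1/2 : ℝ) ^ Fintype.card V),
        Finset.filter_mem_eq_inter, Finset.inter_eq_right.mpr hSFsub,
        Finset.prod_const, hSFcard]
    have hdec : (1/2 : ℝ) ^ Fintype.card U ≤ decDensity H AvgDegAux.μB w := by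
      set T : Finset V := Finset.univ.image f with hT
      have hTcard : T.card = Fintype.card U := by
        rw [hT, Finset.card_image_of_injective _ hf, Finset.card_univ]
      set g : V → Bool → ℝ := fun v b => if v ∈ T then (if b then 1 else 0) else 1 with hg
      have hlow : ∀ x : V → Bool,
          (∏ v, g v (x v)) ≤ ∏ᶠ e ∈ H.edgeSet, sym2Val (w e) x e := by
        intro x
        rw [AvgDegAux.finprod_mem_fin _ H.edgeSet.toFinite]
        rw [show H.edgeSet.toFinite.toFinset = HE from rfl]
        by_cases hx : ∀ u : U, x (f u) = true
        · have h1 : (∏ e ∈ HE, sym2Val (w e) x e) = 1 := by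
            apply Finset.prod_eq_one
            intro e he
            simp only [hw]
            split
            · rename_i hsf
              rw [hSF, Finset.mem_image] at hsf
              obtain ⟨e', _, rfl⟩ := hsf
              induction e' using Sym2.ind with
              | _ a b =>
                rw [Sym2.map_pair_eq, AvgDegAux.sym2Val_Ub]
                simp [hx a, hx b]
            · induction e using Sym2.ind with
              | _ i j => rw [AvgDegAux.sym2Val_mk]; norm_num
          rw [h1]
          apply Finset.prod_le_one
          · intro v _
            simp only [hg]
            split
            · split <;> norm_num
            · norm_num
          · intro v _
            simp only [hg]
            split
            · split <;> norm_num
            · norm_num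
        · push_neg at hx
          obtain ⟨u, hu⟩ := hx
          have h0 : (∏ v, g v (x v)) = 0 := by
            apply Finset.prod_eq_zero (Finset.mem_univ (f u))
            have hfu : f u ∈ T := by rw [hT]; exact Finset.mem_image_of_mem f (Finset.mem_univ u)
            have hxu : x (f u) = false := by simpa using hu
            simp only [hg]
            simp [hfu, hxu]
          rw [h0]
          apply Finset.prod_nonneg
          intro e he
          induction e using Sym2.ind with
          | _ i j =>
            rw [AvgDegAux.sym2Val_mk]
            have h1 := hnn s(i, j) (x i) (x j)
            have h2 := hnn s(i, j) (x j) (x i)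
            positivity
      have hcalc : (1/2 : ℝ) ^ Fintype.card U = ∏ v, ∫ b, g v b ∂AvgDegAux.μB := by
        have hint : ∀ v, ∫ b, g v b ∂AvgDegAux.μB = if v ∈ T then (1/2 : ℝ) else 1 := by
          intro v
          rw [AvgDegAux.integral_μB]
          simp only [hg]
          split <;> norm_num
        rw [Finset.prod_congr rfl (fun v _ => hint v),
          ← Finset.prod_filter (· ∈ T) (fun _ => (1/2 : ℝ)),
          Finset.filter_univ_mem, Finset.prod_const, hTcard]
      rw [hcalc, ← AvgDegAux.integral_pi_prod g]
      exact integral_mono (Integrable.of_finite) (Integrable.of_finite) hlow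
    have hpow : ((1/2 : ℝ) ^ Fintype.card U) ^ H.edgeSet.ncard
        ≤ ((1/2 : ℝ) ^ Fintype.card V) ^ F.edgeSet.ncard := by
      calc ((1/2 : ℝ) ^ Fintype.card U) ^ H.edgeSet.ncard
          ≤ decDensity H AvgDegAux.μB w ^ H.edgeSet.ncard :=
            pow_le_pow_left₀ (by positivity) hdec _
        _ ≤ ∏ᶠ e ∈ H.edgeSet, homDensity H AvgDegAux.μB (w e) := hmain
        _ = ((1/2 : ℝ) ^ Fintype.card V) ^ F.edgeSet.ncard := hRHS
    have hineq : Fintype.card V * F.edgeSet.ncard ≤ Fintype.card U * H.edgeSet.ncard := by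
      by_contra hlt
      push_neg at hlt
      have h2 := pow_lt_pow_right_of_lt_one₀ (by norm_num : (0:ℝ) < 1/2)
        (by norm_num : (1/2 : ℝ) < 1) hlt
      rw [← pow_mul, ← pow_mul] at hpow
      linarith
    have hU0 : (0 : ℝ) < Fintype.card U := by exact_mod_cast Fintype.card_pos
    have hV0 : (0 : ℝ) < Fintype.card V := by exact_mod_cast Fintype.card_pos
    rw [div_le_div_iff₀ hU0 hV0]
    have : (Fintype.card V * F.edgeSet.ncard : ℝ) ≤ Fintype.card U * H.edgeSet.ncard := by
      exact_mod_cast hineq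
    linarith
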